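/- Every local minimum of the loss L on the feasible set B is a Wardrop equilibrium. That is, if b* ∈ B and there is a neighborhood U of b* in ℝ^{C×d} with L(b*) ≤ L(b) for all b ∈ U ∩ B, then for all i ∈ {1,…,d} and all k, k' ∈ {1,…,C}, b*_{k,i} > 0 implies Σ_{j=1}^M x_i^j c_k^j(b̃*_k^j) ≤ Σ_{j=1}^M x_i^j c_{k'}^j(b̃*_{k'}^j). (Theorem 1, in reduced coordinates.) -/

import Mathlib

open Finset

private lemma sum_sum_ite_aux {n m : ℕ} (k0 : Fin n) (f : Fin n → Fin m → ℝ) :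
    ∑ k : Fin n, ∑ j : Fin m, (if k = k0 then f k j else 0) = ∑ j, f k0 j := by
  rw [Finset.sum_comm]
  exact Finset.sum_congr rfl fun j _ => by simp

/-- Theorem 1 (in reduced coordinates): every local minimum of the loss `L` on the
feasible set `B` is a Wardrop equilibrium. -/
theorem stmt_0 (d C M : ℕ) (hd : 0 < d) (hC : 0 < C) (hM : 0 < M)
    (β : ℕ) (hβ : 2 ≤ β)
    (x : Fin d → Fin M → ℝ) (hx : ∀ i j, 0 ≤ x i j)
    (A : Fin C → Fin M → ℝ) (hA : ∀ k j, 0 < A k j)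
    (bstar : Fin C → Fin d → ℝ)
    (hpos : ∀ k i, 0 ≤ bstar k i) (hsum : ∀ i, ∑ k, bstar k i = 1)
    (hloc : ∃ U ∈ nhds bstar, ∀ b ∈ U,
      ((∀ k i, 0 ≤ b k i) ∧ (∀ i, ∑ k, b k i = 1)) →
        (∑ k, ∑ j, A k j * (∑ i, x i j * bstar k i) ^ β) ≤
          ∑ k, ∑ j, A k j * (∑ i, x i j * b k i) ^ β) :
    ∀ (i : Fin d) (k k' : Fin C), 0 < bstar k i →
      (∑ j, x i j * (A k j * (∑ i', x i' j * bstar k i') ^ (β - 1))) ≤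
        ∑ j, x i j * (A k' j * (∑ i', x i' j * bstar k' i') ^ (β - 1)) := by
  intro i k k' hbk
  rcases eq_or_ne k k' with rfl | hkk'
  · exact le_refl _
  -- direction of perturbation
  set e : Fin C → Fin d → ℝ := fun k'' i'' =>
    (((if k'' = k' then (1:ℝ) else 0) - (if k'' = k then 1 else 0)) *
      (if i'' = i then 1 else 0)) with he
  set g : ℝ → ℝ := fun t =>
    ∑ k'', ∑ j, A k'' j * (∑ i', x i' j * (bstar k'' i' + t * e k'' i')) ^ β with hg
  set D : ℝ := (β : ℝ) *
    ((∑ j, x i j * (A k' j * (∑ i', x i' j * bstar k' i') ^ (β - 1))) -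
      ∑ j, x i j * (A k j * (∑ i', x i' j * bstar k i') ^ (β - 1))) with hD
  have hderiv : HasDerivAt g D 0 := by
    have h1 : ∀ k'' j, HasDerivAt
        (fun t : ℝ => A k'' j * (∑ i', x i' j * (bstar k'' i' + t * e k'' i')) ^ β)
        (A k'' j * ((β:ℝ) * (∑ i', x i' j * bstar k'' i') ^ (β - 1) *
          (∑ i', x i' j * e k'' i'))) 0 := by
      intro k'' j
      have hin : HasDerivAt
          (fun t : ℝ => ∑ i', x i' j * (bstar k'' i' + t * e k'' i'))
          (∑ i', x i' j * e k'' i') 0 := by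
        apply HasDerivAt.fun_sum
        intro i' _
        have : HasDerivAt (fun t : ℝ => bstar k'' i' + t * e k'' i') (e k'' i') 0 := by
          simpa using ((hasDerivAt_id (0:ℝ)).mul_const (e k'' i')).const_add (bstar k'' i')
        simpa using this.const_mul (x i' j)
      have := (hin.fun_pow β).const_mul (A k'' j)
      exact this.congr_deriv (by simp)
    have h2 : HasDerivAt g (∑ k'', ∑ j, A k'' j * ((β:ℝ) *
        (∑ i', x i' j * bstar k'' i') ^ (β - 1) * (∑ i', x i' j * e k'' i'))) 0 :=
      HasDerivAt.fun_sum (fun k'' _ => HasDerivAt.fun_sum (fun j _ => h1 k'' j))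
    convert h2 using 1
    have hsum_e : ∀ k'' j, (∑ i', x i' j * e k'' i') =
        x i j * ((if k'' = k' then (1:ℝ) else 0) - (if k'' = k then 1 else 0)) := by
      intro k'' j
      rw [he]
      simp [mul_ite, mul_comm]
    rw [hD]
    simp only [hsum_e]
    have key : ∀ (k'' : Fin C) (j : Fin M),
        A k'' j * ((β:ℝ) * (∑ i', x i' j * bstar k'' i') ^ (β - 1) *
          (x i j * ((if k'' = k' then (1:ℝ) else 0) - (if k'' = k then 1 else 0)))) =
        (if k'' = k' then x i j * ((β:ℝ) * (A k'' j * (∑ i', x i' j * bstar k'' i') ^ (β - 1))) else 0)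
        - (if k'' = k then x i j * ((β:ℝ) * (A k'' j * (∑ i', x i' j * bstar k'' i') ^ (β - 1))) else 0) := by
      intro k'' j
      by_cases h1 : k'' = k' <;> by_cases h2 : k'' = k <;>
        first
        | exact absurd (h2.symm.trans h1) hkk'
        | (simp [h1, h2, hkk', Ne.symm hkk']; try ring)
    simp only [key, Finset.sum_sub_distrib]
    rw [sum_sum_ite_aux, sum_sum_ite_aux, mul_sub, Finset.mul_sum, Finset.mul_sum]
    congr 1 <;> exact Finset.sum_congr rfl fun j _ => by ring
  -- local minimality along the ray
  obtain ⟨U, hU, hmin⟩ := hloc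
  have hcont : Filter.Tendsto (fun t : ℝ => fun k'' i'' => bstar k'' i'' + t * e k'' i'')
      (nhds 0) (nhds bstar) := by
    have hc : Continuous (fun t : ℝ => fun k'' i'' => bstar k'' i'' + t * e k'' i'') := by
      apply continuous_pi; intro k''; apply continuous_pi; intro i''
      exact continuous_const.add (continuous_id.mul continuous_const)
    have h0 : (fun k'' i'' => bstar k'' i'' + (0:ℝ) * e k'' i'') = bstar := by
      funext k'' i''; ring
    have := hc.tendsto 0
    rwa [h0] at this
  have hU' : ∀ᶠ t in nhds (0:ℝ), (fun k'' i'' => bstar k'' i'' + t * e k'' i'') ∈ U :=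
    hcont.eventually_mem hU
  have hsmall : ∀ᶠ t in nhds (0:ℝ), t < bstar k i :=
    eventually_lt_nhds hbk
  have hev : ∀ᶠ t in nhdsWithin 0 (Set.Ioi (0:ℝ)), 0 ≤ slope g 0 t := by
    filter_upwards [hU'.filter_mono nhdsWithin_le_nhds,
      hsmall.filter_mono nhdsWithin_le_nhds,
      self_mem_nhdsWithin] with t htU htlt (htpos : 0 < t)
    have hfeas : (∀ k'' i'', 0 ≤ bstar k'' i'' + t * e k'' i'') ∧
        (∀ i'', ∑ k'', (bstar k'' i'' + t * e k'' i'') = 1) := by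
      constructor
      · intro k'' i''
        simp only [he]
        by_cases hii : i'' = i
        · subst hii
          by_cases h1 : k'' = k'
          · have hne : k'' ≠ k := by rintro rfl; exact hkk' h1
            rw [if_pos h1, if_neg hne, if_pos rfl, sub_zero, one_mul, mul_one]
            nlinarith [hpos k'' i'']
          · by_cases h2 : k'' = k
            · rw [if_neg h1, if_pos h2, if_pos rfl, zero_sub, mul_one, h2]
              nlinarith
            · simp [h1, h2, hpos k'' i'']
        · simp [hii, hpos k'' i'']
      · intro i''
        rw [Finset.sum_add_distrib, hsum, ← Finset.mul_sum, he]
        by_cases hii : i'' = i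
        · subst hii
          simp [Finset.sum_sub_distrib, Finset.sum_ite_eq' univ k',
            Finset.sum_ite_eq' univ k]
        · simp [hii]
    have hle : g 0 ≤ g t := by
      have h0 : g 0 = ∑ k'', ∑ j, A k'' j * (∑ i', x i' j * bstar k'' i') ^ β := by
        rw [hg]; simp
      rw [h0]
      exact hmin _ htU hfeas
    rw [slope_def_field]
    exact div_nonneg (sub_nonneg.mpr hle) (by linarith)
  have htend : Filter.Tendsto (slope g 0) (nhdsWithin 0 (Set.Ioi (0:ℝ))) (nhds D) := by
    have h := (hderiv.hasDerivWithinAt (s := Set.Ioi (0:ℝ)))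
    rw [hasDerivWithinAt_iff_tendsto_slope] at h
    simpa using h
  have hD0 : 0 ≤ D := ge_of_tendsto htend hev
  rw [hD] at hD0
  have hβpos : (0:ℝ) < β := by positivity
  nlinarith [hD0]
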